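/- Let X be a set, G a group, (g, α) ↦ g·α a map G × X* → X* that is length preserving (|g·α| = |α| for all g, α), and (g, α) ↦ g|_α a map G × X* → G. Assume the pair is recurrent: for every h ∈ G and all words α, β with |α| = |β| there exists g ∈ G with g·α = β and g|_α = h. Define the Zappa–Szép multiplication on X* × G by (α, g)(β, h) = (α(g·β), (g|_β)h). Then for every (α, g) ∈ X* × G, the principal left ideal {(γ, k)(α, g) : (γ, k) ∈ X* × G} equals I_{|α|} := {(β, h) ∈ X* × G : |β| ≥ |α|}. In particular, the set of principal left ideals of X* ⋈ G is {I_n : n ∈ ℕ} and is linearly ordered by inclusion. -/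

import Mathlib

/-- For a recurrent, length-preserving self-similar action `(G, X)`, every principal left
ideal of the Zappa–Szép product `X* ⋈ G` (with multiplication
`(α,g)(β,h) = (α(g·β), (g|_β)h)`) equals `I_{|α|} = {(β,h) : |β| ≥ |α|}`; consequently
the set of principal left ideals is `{I_n : n ∈ ℕ}` and is linearly ordered by
inclusion. -/
theorem zappaSzep_leftIdeals {X : Type*} [Nonempty X] {G : Type*} [Group G]
    (act : G → FreeMonoid X → FreeMonoid X) (res : G → FreeMonoid X → G)
    (hlen : ∀ (g : G) (α : FreeMonoid X), (act g α).length = α.length)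
    (hrec : ∀ (h : G) (α β : FreeMonoid X), α.length = β.length →
      ∃ g : G, act g α = β ∧ res g α = h) :
    (∀ (α : FreeMonoid X) (g : G),
      {w : FreeMonoid X × G | ∃ (γ : FreeMonoid X) (k : G), w = (γ * act k α, res k α * g)}
        = {w : FreeMonoid X × G | α.length ≤ w.1.length}) ∧
    ({S : Set (FreeMonoid X × G) | ∃ (α : FreeMonoid X) (g : G),
        S = {w | ∃ (γ : FreeMonoid X) (k : G), w = (γ * act k α, res k α * g)}}
      = {S : Set (FreeMonoid X × G) | ∃ n : ℕ, S = {w | n ≤ w.1.length}}) ∧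
    (∀ (α β : FreeMonoid X) (g h : G),
      {w : FreeMonoid X × G | ∃ (γ : FreeMonoid X) (k : G), w = (γ * act k α, res k α * g)}
        ⊆ {w | ∃ (γ : FreeMonoid X) (k : G), w = (γ * act k β, res k β * h)} ∨
      {w : FreeMonoid X × G | ∃ (γ : FreeMonoid X) (k : G), w = (γ * act k β, res k β * h)}
        ⊆ {w | ∃ (γ : FreeMonoid X) (k : G), w = (γ * act k α, res k α * g)}) := by
  have main : ∀ (α : FreeMonoid X) (g : G),
      {w : FreeMonoid X × G | ∃ (γ : FreeMonoid X) (k : G), w = (γ * act k α, res k α * g)}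
        = {w : FreeMonoid X × G | α.length ≤ w.1.length} := by
    intro α g
    ext ⟨β, h⟩
    simp only [Set.mem_setOf_eq]
    constructor
    · rintro ⟨γ, k, hw⟩
      have h1 : β = γ * act k α := congrArg Prod.fst hw
      have : β.length = γ.length + α.length := by
        rw [h1, FreeMonoid.length_mul, hlen]
      omega
    · intro hle
      set γ : FreeMonoid X := FreeMonoid.ofList (β.toList.take (β.length - α.length)) with hγ
      set δ : FreeMonoid X := FreeMonoid.ofList (β.toList.drop (β.length - α.length)) with hδ
      have hβlen : β.toList.length = β.length := rfl
      have hδlen : α.length = δ.length := by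
        have : δ.length = β.toList.length - (β.length - α.length) :=
          List.length_drop
        omega
      obtain ⟨k, hk1, hk2⟩ := hrec (h * g⁻¹) α δ hδlen
      refine ⟨γ, k, ?_⟩
      rw [hk1, hk2]
      have hsplit : γ * δ = β := by
        have : γ.toList ++ δ.toList = β.toList := by
          simp [hγ, hδ]
        exact FreeMonoid.toList.injective this
      rw [hsplit]
      ext
      · rfl
      · simp
  refine ⟨main, ?_, ?_⟩
  · ext S
    simp only [Set.mem_setOf_eq]
    constructor
    · rintro ⟨α, g, rfl⟩
      exact ⟨α.length, main α g⟩
    · rintro ⟨n, rfl⟩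
      obtain ⟨x⟩ := ‹Nonempty X›
      refine ⟨FreeMonoid.ofList (List.replicate n x), 1, ?_⟩
      rw [main]
      have : (FreeMonoid.ofList (List.replicate n x)).length = n :=
        List.length_replicate
      rw [this]
  · intro α β g h
    rw [main, main]
    rcases le_total α.length β.length with hle | hle
    · right; intro w hw; exact le_trans hle hw
    · left; intro w hw; exact le_trans hle hw
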